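/- arXiv:1306.0725 — 2 statements merged into one kernel-verified Lean document; each statement's English description precedes it below -/
import Mathlib

section
/- Let k be an algebraically closed field and B ⊆ A a subalgebra pair of finite-dimensional k-algebras with 1_B = 1_A such that A is projective as a right B-module. Let P_1,…,P_s and Q_1,…,Q_r be representatives of the isomorphism classes of projective indecomposable right A-modules and right B-modules respectively; let C be the Cartan matrix of A (c_{ij} = dim_k Hom_A(P_i,P_j)) and D the Cartan matrix of B (d_{ij} = dim_k Hom_B(Q_i,Q_j)); let M be the r×s matrix of restriction, defined by P_j↓_B ≅ ⊕_{i=1}^r m_{ij}·Q_i, and N the r×s matrix of induction, defined by Q_i ⊗_B A ≅ ⊕_{j=1}^s n_{ij}·P_j. Then DM = NC. -/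
set_option linter.unusedSectionVars false

namespace MatDepth

open MulOpposite TensorProduct

universe u v

/-- The space `Hom_A(M, N)` of right `A`-module homomorphisms, as a `k`-subspace of
`Hom_k(M, N)`. -/
def homSub (k : Type*) [Field k] (A : Type*) [Ring A] (M N : Type*)
    [AddCommGroup M] [AddCommGroup N] [Module k M] [Module k N]
    [Module Aᵐᵒᵖ M] [Module Aᵐᵒᵖ N] [SMulCommClass k Aᵐᵒᵖ N] :
    Submodule k (M →ₗ[k] N) where
  carrier := {f | ∀ (x : Aᵐᵒᵖ) (m : M), f (x • m) = x • f m}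
  add_mem' := by
    intro f g hf hg x m
    simp only [LinearMap.add_apply, hf x m, hg x m, smul_add]
  zero_mem' := by intro x m; simp
  smul_mem' := by
    intro c f hf x m
    simp only [LinearMap.smul_apply, hf x m, smul_comm]

/-- Isomorphism of right `A`-modules (a `k`-linear equivalence commuting with the
right `A`-actions). -/
def rIso (k : Type*) [Field k] (A : Type*) [Ring A] (M N : Type*)
    [AddCommGroup M] [AddCommGroup N] [Module k M] [Module k N]
    [Module Aᵐᵒᵖ M] [Module Aᵐᵒᵖ N] : Prop :=
  ∃ φ : M ≃ₗ[k] N, ∀ (x : Aᵐᵒᵖ) (m : M), φ (x • m) = x • φ m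

/-- A right `A`-module is indecomposable: it is nontrivial and every idempotent right
`A`-module endomorphism is `0` or the identity. -/
def isIndec (k : Type*) [Field k] (A : Type*) [Ring A] (M : Type*)
    [AddCommGroup M] [Module k M] [Module Aᵐᵒᵖ M] : Prop :=
  Nontrivial M ∧ ∀ f : M →ₗ[k] M, (∀ (x : Aᵐᵒᵖ) (m : M), f (x • m) = x • f m) →
    f ∘ₗ f = f → f = 0 ∨ f = LinearMap.id

variable {k : Type u} [Field k] {A : Type u} [Ring A] [Algebra k A]

/-- The balancing relations defining `X ⊗_B A` for a right `B`-module `X`. -/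
def indRel (B : Subalgebra k A) (X : Type u) [AddCommGroup X] [Module k X]
    [Module Bᵐᵒᵖ X] : Submodule k (X ⊗[k] A) :=
  Submodule.span k {z | ∃ (x : X) (b : B) (a : A),
    z = (op b • x) ⊗ₜ[k] a - x ⊗ₜ[k] ((b : A) * a)}

/-- The induced module `X ⊗_B A` of a right `B`-module `X` along `B ⊆ A`. -/
def Ind (B : Subalgebra k A) (X : Type u) [AddCommGroup X] [Module k X]
    [Module Bᵐᵒᵖ X] : Type u :=
  (X ⊗[k] A) ⧸ indRel B X

noncomputable instance (B : Subalgebra k A) (X : Type u) [AddCommGroup X] [Module k X]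
    [Module Bᵐᵒᵖ X] : AddCommGroup (Ind B X) :=
  inferInstanceAs (AddCommGroup ((X ⊗[k] A) ⧸ indRel B X))
noncomputable instance (B : Subalgebra k A) (X : Type u) [AddCommGroup X] [Module k X]
    [Module Bᵐᵒᵖ X] : Module k (Ind B X) :=
  inferInstanceAs (Module k ((X ⊗[k] A) ⧸ indRel B X))

lemma indLe (B : Subalgebra k A) (X : Type u) [AddCommGroup X] [Module k X]
    [Module Bᵐᵒᵖ X] (a : A) :
    indRel B X ≤ (indRel B X).comap (LinearMap.lTensor X (LinearMap.mulRight k a)) := by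
  rw [indRel, Submodule.span_le]
  rintro z ⟨x, b, a', rfl⟩
  simp only [SetLike.mem_coe, Submodule.mem_comap, map_sub, LinearMap.lTensor_tmul,
    LinearMap.mulRight_apply]
  refine Submodule.subset_span ⟨x, b, a' * a, ?_⟩
  rw [mul_assoc]

/-- The right `A`-action on the induced module `X ⊗_B A` (right multiplication on the
second factor). -/
noncomputable def IndAct (B : Subalgebra k A) (X : Type u) [AddCommGroup X] [Module k X]
    [Module Bᵐᵒᵖ X] (a : A) : Ind B X →ₗ[k] Ind B X :=
  Submodule.mapQ _ _ (LinearMap.lTensor X (LinearMap.mulRight k a)) (indLe B X a)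

section AuxLemmas

lemma finrank_submodule_congr (k : Type*) [Field k] {V W : Type*} [AddCommGroup V]
    [AddCommGroup W] [Module k V] [Module k W] (e : V ≃ₗ[k] W) (p : Submodule k V)
    (q : Submodule k W) (h : ∀ v, v ∈ p ↔ e v ∈ q) :
    Module.finrank k p = Module.finrank k q := by
  have hmap : p.map (e : V →ₗ[k] W) = q := by
    ext w
    constructor
    · rintro ⟨v, hv, rfl⟩
      exact (h v).1 hv
    · intro hw
      refine ⟨e.symm w, (h _).2 ?_, by simp⟩
      simpa using hw
  rw [← hmap]
  exact (e.submoduleMap p).finrank_eq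

lemma finrank_homSub_pi (k A : Type*) [Field k] [Ring A]
    (X : Type*) [AddCommGroup X] [Module k X] [Module Aᵐᵒᵖ X] [FiniteDimensional k X]
    {ι : Type*} [Fintype ι] (Y : ι → Type*)
    [∀ l, AddCommGroup (Y l)] [∀ l, Module k (Y l)] [∀ l, Module Aᵐᵒᵖ (Y l)]
    [∀ l, SMulCommClass k Aᵐᵒᵖ (Y l)] [∀ l, FiniteDimensional k (Y l)] :
    Module.finrank k (homSub k A X (∀ l, Y l))
      = ∑ l, Module.finrank k (homSub k A X (Y l)) := by
  let e : (X →ₗ[k] ∀ l, Y l) ≃ₗ[k] ∀ l, (X →ₗ[k] Y l) :=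
    { toFun := fun f l => (LinearMap.proj l).comp f
      map_add' := fun f g => rfl
      map_smul' := fun c f => rfl
      invFun := fun g => LinearMap.pi g
      left_inv := fun f => by ext x; rfl
      right_inv := fun g => by ext l x; rfl }
  have hmem : ∀ f, f ∈ homSub k A X (∀ l, Y l) ↔
      e f ∈ Submodule.pi Set.univ fun l => homSub k A X (Y l) := by
    intro f
    rw [Submodule.mem_pi]
    constructor
    · intro hf l _ x m
      show f (x • m) l = x • f m l
      rw [hf x m]
      rfl
    · intro hf x m
      funext l
      exact hf l (Set.mem_univ l) x m
  rw [finrank_submodule_congr k e _ _ hmem]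
  let e2 : (Submodule.pi Set.univ fun l => homSub k A X (Y l)) ≃ₗ[k]
        ∀ l, homSub k A X (Y l) :=
      { toFun := fun f l => ⟨f.1 l, f.2 l (Set.mem_univ l)⟩
        map_add' := fun f g => rfl
        map_smul' := fun c f => rfl
        invFun := fun g => ⟨fun l => (g l).1, fun l _ => (g l).2⟩
        left_inv := fun f => rfl
        right_inv := fun g => rfl }
  rw [e2.finrank_eq, Module.finrank_pi_fintype]

lemma finrank_homSub_pi_left (k A : Type*) [Field k] [Ring A]
    {ι : Type*} [Fintype ι] [DecidableEq ι] (X : ι → Type*)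
    [∀ l, AddCommGroup (X l)] [∀ l, Module k (X l)] [∀ l, Module Aᵐᵒᵖ (X l)]
    [∀ l, FiniteDimensional k (X l)]
    (Y : Type*) [AddCommGroup Y] [Module k Y] [Module Aᵐᵒᵖ Y]
    [SMulCommClass k Aᵐᵒᵖ Y] [FiniteDimensional k Y] :
    Module.finrank k (homSub k A (∀ l, X l) Y)
      = ∑ l, Module.finrank k (homSub k A (X l) Y) := by
  let e : ((∀ l, X l) →ₗ[k] Y) ≃ₗ[k] ∀ l, (X l →ₗ[k] Y) :=
    { toFun := fun f l => f.comp (LinearMap.single k X l)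
      map_add' := fun f g => rfl
      map_smul' := fun c f => rfl
      invFun := fun g => ∑ l, (g l).comp (LinearMap.proj l)
      left_inv := fun f => by
        refine LinearMap.ext fun x => ?_
        simp only [LinearMap.sum_apply, LinearMap.comp_apply, LinearMap.proj_apply,
          LinearMap.coe_single]
        rw [show (∑ l, f (Pi.single l (x l))) = f (∑ l, Pi.single l (x l)) from
          (map_sum f _ _).symm, Finset.univ_sum_single]
      right_inv := fun g => by
        funext l
        refine LinearMap.ext fun x => ?_
        simp only [LinearMap.sum_apply, LinearMap.comp_apply, LinearMap.proj_apply,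
          LinearMap.coe_single]
        rw [Finset.sum_eq_single l]
        · rw [Pi.single_eq_same]
        · intro b _ hb
          rw [Pi.single_eq_of_ne hb, map_zero]
        · intro h; exact absurd (Finset.mem_univ l) h }
  have hmem : ∀ f, f ∈ homSub k A (∀ l, X l) Y ↔
      e f ∈ Submodule.pi Set.univ fun l => homSub k A (X l) Y := by
    intro f
    rw [Submodule.mem_pi]
    constructor
    · intro hf l _ x m
      show f (LinearMap.single k X l (x • m)) = x • f (LinearMap.single k X l m)
      have h1 : LinearMap.single k X l (x • m) = x • LinearMap.single k X l m := by
        simp only [LinearMap.coe_single]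
        exact Pi.single_smul l x m
      rw [h1, hf]
    · intro hf x m
      have hm : m = ∑ l, Pi.single l (m l) := (Finset.univ_sum_single m).symm
      calc f (x • m) = f (x • ∑ l, Pi.single l (m l)) := by rw [← hm]
        _ = f (∑ l, Pi.single l (x • m l)) := by
            rw [Finset.smul_sum]
            congr 1
            refine Finset.sum_congr rfl fun l _ => ?_
            exact (Pi.single_smul l x (m l)).symm
        _ = ∑ l, f (Pi.single l (x • m l)) := map_sum f _ _
        _ = ∑ l, x • f (Pi.single l (m l)) := by
            refine Finset.sum_congr rfl fun l _ => ?_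
            exact hf l (Set.mem_univ l) x (m l)
        _ = x • f (∑ l, Pi.single l (m l)) := by rw [map_sum, Finset.smul_sum]
        _ = x • f m := by rw [← hm]
  rw [finrank_submodule_congr k e _ _ hmem]
  let e2 : (Submodule.pi Set.univ fun l => homSub k A (X l) Y) ≃ₗ[k]
        ∀ l, homSub k A (X l) Y :=
      { toFun := fun f l => ⟨f.1 l, f.2 l (Set.mem_univ l)⟩
        map_add' := fun f g => rfl
        map_smul' := fun c f => rfl
        invFun := fun g => ⟨fun l => (g l).1, fun l _ => (g l).2⟩
        left_inv := fun f => rfl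
        right_inv := fun g => rfl }
  rw [e2.finrank_eq, Module.finrank_pi_fintype]

end AuxLemmas

/-- The restriction of the right `A`-module structure on `M` to a right `B`-module
structure along `B ⊆ A`. -/
def modRes (B : Subalgebra k A) (M : Type*) [AddCommGroup M] [Module Aᵐᵒᵖ M] :
    Module Bᵐᵒᵖ M :=
  Module.compHom M (RingHom.op (B.val : B →+* A) : Bᵐᵒᵖ →+* Aᵐᵒᵖ)

lemma IndAct_mk (B : Subalgebra k A) (X : Type u) [AddCommGroup X] [Module k X]
    [Module Bᵐᵒᵖ X] (a : A) (t : X ⊗[k] A) :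
    IndAct B X a (Submodule.Quotient.mk t)
      = Submodule.Quotient.mk (LinearMap.lTensor X (LinearMap.mulRight k a) t) :=
  Submodule.mapQ_apply _ _ _ t

/-- The right `A`-module structure on the induced module. -/
noncomputable def indModule (B : Subalgebra k A) (X : Type u) [AddCommGroup X] [Module k X]
    [Module Bᵐᵒᵖ X] : Module Aᵐᵒᵖ (Ind B X) where
  smul x z := IndAct B X x.unop z
  one_smul z := by
    obtain ⟨t, rfl⟩ := Submodule.Quotient.mk_surjective _ z
    show IndAct B X (1 : Aᵐᵒᵖ).unop _ = _
    rw [IndAct_mk]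
    congr 1
    rw [show ((1 : Aᵐᵒᵖ).unop) = (1 : A) from rfl, LinearMap.mulRight_one,
      LinearMap.lTensor_id, LinearMap.id_apply]
  mul_smul x y z := by
    obtain ⟨t, rfl⟩ := Submodule.Quotient.mk_surjective _ z
    show IndAct B X (x * y).unop _ = IndAct B X x.unop (IndAct B X y.unop _)
    rw [IndAct_mk, IndAct_mk, IndAct_mk]
    congr 1
    rw [show (x * y).unop = y.unop * x.unop from rfl, LinearMap.mulRight_mul,
      LinearMap.lTensor_comp, LinearMap.comp_apply]
  smul_zero x := map_zero (IndAct B X x.unop)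
  smul_add x z w := map_add (IndAct B X x.unop) z w
  add_smul x y z := by
    obtain ⟨t, rfl⟩ := Submodule.Quotient.mk_surjective _ z
    show IndAct B X (x + y).unop _ = IndAct B X x.unop _ + IndAct B X y.unop _
    erw [IndAct_mk, IndAct_mk, IndAct_mk, ← Submodule.Quotient.mk_add]
    congr 1
    have h1 : LinearMap.mulRight k ((x + y).unop)
        = LinearMap.mulRight k x.unop + LinearMap.mulRight k y.unop := by
      ext c
      show c * (x.unop + y.unop) = c * x.unop + c * y.unop
      rw [mul_add]
    rw [h1, LinearMap.lTensor_add, LinearMap.add_apply]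
  zero_smul z := by
    obtain ⟨t, rfl⟩ := Submodule.Quotient.mk_surjective _ z
    show IndAct B X (0 : Aᵐᵒᵖ).unop _ = _
    rw [IndAct_mk]
    have h1 : LinearMap.mulRight k ((0 : Aᵐᵒᵖ).unop) = (0 : A →ₗ[k] A) := by
      ext c
      show c * 0 = 0
      rw [mul_zero]
    rw [h1, LinearMap.lTensor_zero, LinearMap.zero_apply, Submodule.Quotient.mk_zero]
    exact rfl

end MatDepth

open MatDepth MulOpposite in
/-- over an algebraically closed field `k`, for a subalgebra pair `B ⊆ A` of
finite-dimensional algebras with `A` projective as a right `B`-module, with `P₁,…,P_s` and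
`Q₁,…,Q_r` the projective indecomposable right `A`- resp. `B`-modules, `M` the matrix of
restriction (`P_j↓_B ≅ ⊕ᵢ m_{ij}·Qᵢ`), `N` the matrix of induction (`Qᵢ ⊗_B A ≅ ⊕ⱼ n_{ij}·P_j`),
and `C`, `D` the Cartan matrices `c_{ij} = dim Hom_A(Pᵢ,Pⱼ)`, `d_{ij} = dim Hom_B(Qᵢ,Qⱼ)`,
one has `D M = N C`. -/
theorem cartan_matrices_relate_restriction_and_induction
    (k : Type u) [Field k] [IsAlgClosed k]
    (A : Type u) [Ring A] [Algebra k A] [FiniteDimensional k A]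
    (B : Subalgebra k A)
    (hAprojB : @Module.Projective Bᵐᵒᵖ _ A _ (modRes B A))
    (s r : ℕ)
    (P : Fin s → Type u) [∀ j, AddCommGroup (P j)] [∀ j, Module k (P j)]
    [∀ j, Module Aᵐᵒᵖ (P j)] [∀ j, SMulCommClass k Aᵐᵒᵖ (P j)]
    [∀ j, IsScalarTower k Aᵐᵒᵖ (P j)] [∀ j, FiniteDimensional k (P j)]
    (hPproj : ∀ j, Module.Projective Aᵐᵒᵖ (P j))
    (hPindec : ∀ j, isIndec k A (P j))
    (hPdistinct : ∀ j j', j ≠ j' → ¬ rIso k A (P j) (P j'))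
    (hPcomplete : ∀ (X : Type u) [AddCommGroup X] [Module k X] [Module Aᵐᵒᵖ X]
      [SMulCommClass k Aᵐᵒᵖ X] [IsScalarTower k Aᵐᵒᵖ X] [FiniteDimensional k X],
      Module.Projective Aᵐᵒᵖ X → isIndec k A X → ∃ j, rIso k A X (P j))
    (Q : Fin r → Type u) [∀ i, AddCommGroup (Q i)] [∀ i, Module k (Q i)]
    [∀ i, Module Bᵐᵒᵖ (Q i)] [∀ i, SMulCommClass k Bᵐᵒᵖ (Q i)]
    [∀ i, IsScalarTower k Bᵐᵒᵖ (Q i)] [∀ i, FiniteDimensional k (Q i)]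
    (hQproj : ∀ i, Module.Projective Bᵐᵒᵖ (Q i))
    (hQindec : ∀ i, isIndec k B (Q i))
    (hQdistinct : ∀ i i', i ≠ i' → ¬ rIso k B (Q i) (Q i'))
    (hQcomplete : ∀ (X : Type u) [AddCommGroup X] [Module k X] [Module Bᵐᵒᵖ X]
      [SMulCommClass k Bᵐᵒᵖ X] [IsScalarTower k Bᵐᵒᵖ X] [FiniteDimensional k X],
      Module.Projective Bᵐᵒᵖ X → isIndec k B X → ∃ i, rIso k B X (Q i))
    (M N : Fin r → Fin s → ℕ)
    (hM : ∀ j, ∃ φ : P j ≃ₗ[k] (∀ i, Fin (M i j) → Q i),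
      ∀ (b : B) (p : P j), φ (op (b : A) • p) = fun i l => op b • φ p i l)
    (hN : ∀ i, ∃ φ : Ind B (Q i) ≃ₗ[k] (∀ j, Fin (N i j) → P j),
      ∀ (a : A) (z : Ind B (Q i)), φ (IndAct B (Q i) a z) = fun j l => op a • φ z j l) :
    ∀ (i : Fin r) (j : Fin s),
      ∑ l : Fin r, Module.finrank k (homSub k B (Q i) (Q l)) * M l j
        = ∑ l : Fin s, N i l * Module.finrank k (homSub k A (P l) (P j)) := by
  intro i j
  classical
  obtain ⟨φ, hφ⟩ := hM j
  obtain ⟨ψ, hψ⟩ := hN i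
  letI instPB : Module Bᵐᵒᵖ (P j) := modRes B (P j)
  have hres : ∀ (x : Bᵐᵒᵖ) (p : P j), x • p = op ((x.unop : B) : A) • p := fun x p => rfl
  haveI : SMulCommClass k Bᵐᵒᵖ (P j) := by
    constructor
    intro c x p
    rw [hres x p, hres x (c • p)]
    exact smul_comm c _ p
  letI instInd : Module Aᵐᵒᵖ (Ind B (Q i)) := indModule B (Q i)
  have hind : ∀ (a : A) (z : Ind B (Q i)), op a • z = IndAct B (Q i) a z := fun _ _ => rfl
  haveI : SMulCommClass k Aᵐᵒᵖ (Ind B (Q i)) := by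
    constructor
    intro c x z
    exact ((IndAct B (Q i) x.unop).map_smul c z).symm
  -- Left-hand side: restriction
  have hL : Module.finrank k (homSub k B (Q i) (P j))
      = ∑ l : Fin r, Module.finrank k (homSub k B (Q i) (Q l)) * M l j := by
    have hφ' : ∀ (x : Bᵐᵒᵖ) (p : P j), φ (x • p) = x • φ p := by
      intro x p
      rw [hres x p, hφ x.unop p]
      funext l t
      rw [MulOpposite.op_unop]
      rfl
    have hmem : ∀ f : Q i →ₗ[k] P j, f ∈ homSub k B (Q i) (P j) ↔
        (LinearEquiv.arrowCongr (LinearEquiv.refl k (Q i)) φ) f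
          ∈ homSub k B (Q i) (∀ l, Fin (M l j) → Q l) := by
      intro f
      constructor
      · intro hf x m
        simp only [LinearEquiv.arrowCongr_apply, LinearEquiv.refl_symm, LinearEquiv.refl_apply]
        rw [hf x m]
        exact hφ' x (f m)
      · intro hf x m
        have h2 := hf x m
        simp only [LinearEquiv.arrowCongr_apply, LinearEquiv.refl_symm,
          LinearEquiv.refl_apply] at h2
        rw [← hφ' x (f m)] at h2
        exact φ.injective h2
    rw [finrank_submodule_congr k (LinearEquiv.arrowCongr (LinearEquiv.refl k (Q i)) φ)
        _ _ hmem,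
      finrank_homSub_pi k B (Q i) (fun l => Fin (M l j) → Q l)]
    refine Finset.sum_congr rfl fun l _ => ?_
    rw [finrank_homSub_pi k B (Q i) (fun _ : Fin (M l j) => Q l), Finset.sum_const,
      Finset.card_univ, Fintype.card_fin, smul_eq_mul, mul_comm]
  -- Right-hand side: induction
  have hR : Module.finrank k (homSub k A (Ind B (Q i)) (P j))
      = ∑ l : Fin s, N i l * Module.finrank k (homSub k A (P l) (P j)) := by
    have hψ' : ∀ (x : Aᵐᵒᵖ) (z : Ind B (Q i)), ψ (x • z) = x • ψ z := by
      intro x z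
      rw [show x • z = IndAct B (Q i) x.unop z from rfl, hψ x.unop z]
      funext l t
      rw [MulOpposite.op_unop]
      rfl
    have hψs : ∀ (x : Aᵐᵒᵖ) (w : ∀ l, Fin (N i l) → P l),
        ψ.symm (x • w) = x • ψ.symm w := by
      intro x w
      apply ψ.injective
      rw [hψ' x (ψ.symm w), ψ.apply_symm_apply, ψ.apply_symm_apply]
    have hmem : ∀ g : Ind B (Q i) →ₗ[k] P j, g ∈ homSub k A (Ind B (Q i)) (P j) ↔
        (LinearEquiv.arrowCongr ψ (LinearEquiv.refl k (P j))) g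
          ∈ homSub k A (∀ l, Fin (N i l) → P l) (P j) := by
      intro g
      constructor
      · intro hg x m
        simp only [LinearEquiv.arrowCongr_apply, LinearEquiv.refl_apply]
        rw [hψs x m]
        exact hg x (ψ.symm m)
      · intro hg x z
        have h2 := hg x (ψ z)
        simp only [LinearEquiv.arrowCongr_apply, LinearEquiv.refl_apply] at h2
        rw [hψs x (ψ z), ψ.symm_apply_apply] at h2
        exact h2
    rw [finrank_submodule_congr k (LinearEquiv.arrowCongr ψ (LinearEquiv.refl k (P j)))
        _ _ hmem,
      finrank_homSub_pi_left k A (fun l => Fin (N i l) → P l) (P j)]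
    refine Finset.sum_congr rfl fun l _ => ?_
    rw [finrank_homSub_pi_left k A (fun _ : Fin (N i l) => P l) (P j), Finset.sum_const,
      Finset.card_univ, Fintype.card_fin, smul_eq_mul]
  -- Adjunction (Frobenius reciprocity)
  let unit : Q i →ₗ[k] Ind B (Q i) :=
    (indRel B (Q i)).mkQ.comp ((TensorProduct.mk k (Q i) A).flip 1)
  have unit_apply : ∀ q : Q i, unit q = Submodule.Quotient.mk (q ⊗ₜ[k] (1 : A)) :=
    fun q => rfl
  have unit_smul : ∀ (x : Bᵐᵒᵖ) (q : Q i),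
      unit (x • q) = op ((x.unop : B) : A) • unit q := by
    intro x q
    rw [hind, unit_apply, unit_apply, IndAct_mk, LinearMap.lTensor_tmul,
      LinearMap.mulRight_apply]
    erw [Submodule.Quotient.eq]
    refine Submodule.subset_span ⟨q, x.unop, 1, ?_⟩
    rw [one_mul, mul_one, MulOpposite.op_unop]
  have exLift : ∀ f : Q i →ₗ[k] P j, f ∈ homSub k B (Q i) (P j) →
      ∃ F : Ind B (Q i) →ₗ[k] P j, (F ∈ homSub k A (Ind B (Q i)) (P j)) ∧
        (∀ (q : Q i) (a : A), F (Submodule.Quotient.mk (q ⊗ₜ[k] a)) = op a • f q) := by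
    intro f hf
    have h1 : ∀ (b : B) (q : Q i), f (op b • q) = op (b : A) • f q := by
      intro b q
      rw [hf (op b) q, hres (op b) (f q), MulOpposite.unop_op]
    let β : Q i →ₗ[k] A →ₗ[k] P j := LinearMap.mk₂ k (fun q a => op a • f q)
      (fun q q' a => by
        show op a • f (q + q') = op a • f q + op a • f q'
        rw [map_add, smul_add])
      (fun c q a => by
        show op a • f (c • q) = c • (op a • f q)
        rw [map_smul]
        exact (smul_comm c (op a) (f q)).symm)
      (fun q a a' => by
        show op (a + a') • f q = op a • f q + op a' • f q
        rw [MulOpposite.op_add, add_smul])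
      (fun c q a => by
        show op (c • a) • f q = c • (op a • f q)
        rw [MulOpposite.op_smul, smul_assoc])
    let F0 : TensorProduct k (Q i) A →ₗ[k] P j := TensorProduct.lift β
    have hker : indRel B (Q i) ≤ LinearMap.ker F0 := by
      rw [indRel, Submodule.span_le]
      rintro z ⟨q, b, a, rfl⟩
      simp only [SetLike.mem_coe, LinearMap.mem_ker, map_sub, TensorProduct.lift.tmul,
        LinearMap.mk₂_apply, F0, β]
      rw [h1 b q, smul_smul, ← MulOpposite.op_mul, sub_self]
    let F : Ind B (Q i) →ₗ[k] P j := (indRel B (Q i)).liftQ F0 hker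
    have hFmk : ∀ (q : Q i) (a : A),
        F (Submodule.Quotient.mk (q ⊗ₜ[k] a)) = op a • f q := by
      intro q a
      show F0 (q ⊗ₜ[k] a) = op a • f q
      rw [TensorProduct.lift.tmul]
      simp only [β, LinearMap.mk₂_apply]
    refine ⟨F, ?_, hFmk⟩
    intro x z
    obtain ⟨t, rfl⟩ := Submodule.Quotient.mk_surjective _ z
    rw [← MulOpposite.op_unop x, hind x.unop (Submodule.Quotient.mk t), IndAct_mk]
    induction t using TensorProduct.induction_on with
    | zero =>
        simp
        exact F.map_zero.trans ((smul_zero x).symm.trans (congrArg (x • ·) F.map_zero.symm))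
    | tmul q a =>
        rw [LinearMap.lTensor_tmul, LinearMap.mulRight_apply, hFmk q (a * x.unop),
          hFmk q a, smul_smul, MulOpposite.op_mul]
    | add t1 t2 ih1 ih2 =>
        rw [map_add, Submodule.Quotient.mk_add, Submodule.Quotient.mk_add]
        erw [map_add, map_add]
        rw [smul_add, ih1, ih2]
  choose liftF hliftmem hliftmk using exLift
  have hcomp : ∀ g : homSub k A (Ind B (Q i)) (P j),
      (g : Ind B (Q i) →ₗ[k] P j).comp unit ∈ homSub k B (Q i) (P j) := by
    intro g x q
    show (g : Ind B (Q i) →ₗ[k] P j) (unit (x • q))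
      = x • (g : Ind B (Q i) →ₗ[k] P j) (unit q)
    rw [unit_smul x q, g.2 (op ((x.unop : B) : A)) (unit q),
      hres x ((g : Ind B (Q i) →ₗ[k] P j) (unit q))]
  let Eadj : (homSub k A (Ind B (Q i)) (P j)) ≃ₗ[k] (homSub k B (Q i) (P j)) :=
    { toFun := fun g => ⟨(g : Ind B (Q i) →ₗ[k] P j).comp unit, hcomp g⟩
      map_add' := fun g g' => Subtype.ext (LinearMap.ext fun q => rfl)
      map_smul' := fun c g => Subtype.ext (LinearMap.ext fun q => rfl)
      invFun := fun f => ⟨liftF f.1 f.2, hliftmem f.1 f.2⟩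
      left_inv := fun g => by
        refine Subtype.ext (Submodule.linearMap_qext _ (TensorProduct.ext' fun q a => ?_))
        show liftF _ _ (Submodule.Quotient.mk (q ⊗ₜ[k] a))
          = g.1 (Submodule.Quotient.mk (q ⊗ₜ[k] a))
        rw [hliftmk]
        have h3 : (Submodule.Quotient.mk (q ⊗ₜ[k] a) : Ind B (Q i)) = op a • unit q := by
          rw [hind, unit_apply, IndAct_mk, LinearMap.lTensor_tmul,
            LinearMap.mulRight_apply, one_mul]
        rw [h3, g.2 (op a) (unit q)]
        rfl
      right_inv := fun f => by
        refine Subtype.ext (LinearMap.ext fun q => ?_)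
        show liftF f.1 f.2 (unit q) = f.1 q
        rw [unit_apply, hliftmk, MulOpposite.op_one, one_smul] }
  have hAdj : Module.finrank k (homSub k A (Ind B (Q i)) (P j))
      = Module.finrank k (homSub k B (Q i) (P j)) := Eadj.finrank_eq
  rw [← hL, ← hAdj]
  exact hR
end

section
/- Let G be a finite group and k a field whose characteristic does not divide |G|. Identifying kG with the subalgebra 1_{(kG)*} ⋈ kG of the Drinfeld double D(G), the centers satisfy kZ(G) = Z(D(G)) ∩ kG, where Z(G) is the center of the group G and Z(D(G)) the center of the algebra D(G). -/
set_option linter.unusedSectionVars false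

namespace GroupModDepth

open MulOpposite TensorProduct

universe u

variable (k G : Type u) [Field k] [Group G]

/-- A right `G`-module (`k`-linear representation of `G` by right operators):
a `k`-vector space with a monoid homomorphism `G →* (End_k V)ᵐᵒᵖ`. -/
structure GVec : Type (u+1) where
  V : Type u
  [acg : AddCommGroup V]
  [mod : Module k V]
  σ : G →* (Module.End k V)ᵐᵒᵖ

attribute [instance] GVec.acg GVec.mod

variable {k G}

/-- The action of `g` on a right `G`-module, as a `k`-linear endomorphism. -/
def GVec.act (W : GVec k G) (g : G) : Module.End k W.V := unop (W.σ g)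

/-- Tensor product of right `G`-modules with the diagonal action. -/
noncomputable def GVec.tmul (M N : GVec k G) : GVec k G where
  V := TensorProduct k M.V N.V
  σ :=
  { toFun := fun g => op (TensorProduct.map (M.act g) (N.act g))
    map_one' := by
      apply unop_injective
      refine LinearMap.ext fun v => ?_
      simp only [GVec.act, map_one, unop_one, unop_op]
      rw [show ((1 : Module.End k M.V)) = LinearMap.id from rfl,
        show ((1 : Module.End k N.V)) = LinearMap.id from rfl, TensorProduct.map_id]
      rfl
    map_mul' := fun g h => by
      apply unop_injective
      simp only [GVec.act, map_mul, unop_mul, unop_op, Module.End.mul_eq_comp,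
        TensorProduct.map_comp] }

/-- The trivial right `G`-module `k`. -/
def GVec.triv : GVec k G where
  V := k
  σ := 1

/-- Direct sum (finite product) of right `G`-modules. -/
noncomputable def GVec.pi {m : ℕ} (F : Fin m → GVec k G) : GVec k G where
  V := ∀ i, (F i).V
  σ :=
  { toFun := fun g => op (LinearMap.pi (fun i => ((F i).act g).comp (LinearMap.proj i)))
    map_one' := by
      apply unop_injective
      exact LinearMap.ext fun v => funext fun i => by simp [GVec.act]
    map_mul' := fun g h => by
      apply unop_injective
      refine LinearMap.ext fun v => funext fun i => ?_
      simp [GVec.act, Module.End.mul_eq_comp] }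

/-- `q` copies of a right `G`-module. -/
noncomputable def GVec.copies (q : ℕ) (N : GVec k G) : GVec k G := GVec.pi (fun _ : Fin q => N)

/-- Tensor powers: `tpow W n = W^{⊗(n+1)}` with the diagonal `G`-action. -/
noncomputable def GVec.tpow (W : GVec k G) : ℕ → GVec k G
  | 0 => W
  | n+1 => (W.tpow n).tmul W

/-- `Tsum W n = T_{n+1}(W) = W ⊕ W^{⊗2} ⊕ ⋯ ⊕ W^{⊗(n+1)}`. -/
noncomputable def GVec.Tsum (W : GVec k G) (n : ℕ) : GVec k G :=
  GVec.pi (fun i : Fin (n+1) => W.tpow i)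

/-- `M | N`: `M` is isomorphic to a direct summand of `N` as right `G`-modules
(equivalently, as `kG`-modules). -/
def GVec.Dvd (M N : GVec k G) : Prop :=
  ∃ (f : M.V →ₗ[k] N.V) (g : N.V →ₗ[k] M.V),
    (∀ (x : G) v, f (M.act x v) = N.act x (f v)) ∧
    (∀ (x : G) w, g (N.act x w) = M.act x (g w)) ∧
    (∀ v, g (f v) = v)

/-- Isomorphism of right `G`-modules. -/
def GVec.Iso (M N : GVec k G) : Prop :=
  ∃ (f : M.V →ₗ[k] N.V) (g : N.V →ₗ[k] M.V),
    (∀ (x : G) v, f (M.act x v) = N.act x (f v)) ∧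
    (∀ (x : G) w, g (N.act x w) = M.act x (g w)) ∧
    (∀ v, g (f v) = v) ∧ (∀ w, f (g w) = w)

/-- A right `G`-module `W` (equivalently, `kG`-module) has depth `n`. -/
def GVec.hasDepth (W : GVec k G) : ℕ → Prop
  | 0 => ∃ q, W.Iso (GVec.copies q (GVec.triv (k := k) (G := G)))
  | n+1 => ∃ q, (W.Tsum (n+1)).Dvd (GVec.copies q (W.Tsum n))

/-- The minimum depth `d(W, 𝓜_{kG})` of `W` as a `kG`-module. -/
noncomputable def GVec.minDepth (W : GVec k G) : ℕ∞ :=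
  sInf {m : ℕ∞ | ∃ j : ℕ, m = j ∧ W.hasDepth j}

/-- The action of the group algebra `kG` on a right `G`-module `W`. -/
noncomputable def GVec.aact (W : GVec k G) : MonoidAlgebra k G →ₗ[k] Module.End k W.V :=
  Finsupp.linearCombination k (fun g => W.act g) ∘ₗ
    (MonoidAlgebra.coeffLinearEquiv k).toLinearMap

/-- `W` is a faithful `kG`-module: its annihilator in `kG` is zero. -/
def GVec.Faithful (W : GVec k G) : Prop := ∀ c : MonoidAlgebra k G, W.aact c = 0 → c = 0

/-- `ℓ_W`: the least `n ≥ 1` such that `W^{⊗n}` is a faithful `kG`-module. -/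
noncomputable def GVec.ell (W : GVec k G) : ℕ :=
  sInf {n : ℕ | ∃ m, n = m + 1 ∧ (W.tpow m).Faithful}

end GroupModDepth

namespace GroupModDepth

open MulOpposite TensorProduct

universe u

variable (k G : Type u) [Field k] [Group G]

/-- Conjugation `x ↦ g⁻¹ x g` on the group algebra, extended `k`-linearly. -/
noncomputable def adEnd (g : G) : Module.End k (MonoidAlgebra k G) :=
  MonoidAlgebra.mapDomainLinearMap k k (fun x => g⁻¹ * x * g)

lemma adEnd_single (g x : G) (b : k) :
    adEnd k G g (MonoidAlgebra.single x b) = MonoidAlgebra.single (g⁻¹ * x * g) b :=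
  MonoidAlgebra.mapDomain_single

/-- The group algebra `kG` as a right `G`-module under the adjoint action `x · g = g⁻¹ x g`:
the module `kG_ad` (isomorphic to `Q = D(G)/(kG)⁺D(G)`). -/
noncomputable def adRep : GVec k G where
  V := MonoidAlgebra k G
  σ :=
  { toFun := fun g => op (adEnd k G g)
    map_one' := by
      apply unop_injective
      refine MonoidAlgebra.lhom_ext' fun x => LinearMap.ext fun b => ?_
      simp only [LinearMap.comp_apply, MonoidAlgebra.lsingle_apply, unop_op, unop_one,
        adEnd_single, Module.End.one_apply]
      simp
    map_mul' := fun g h => by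
      apply unop_injective
      refine MonoidAlgebra.lhom_ext' fun x => LinearMap.ext fun b => ?_
      simp only [LinearMap.comp_apply, MonoidAlgebra.lsingle_apply, unop_op, unop_mul,
        Module.End.mul_apply, adEnd_single]
      simp [mul_assoc, mul_inv_rev] }

variable [DecidableEq G]

/-- Data exhibiting `D` as the Drinfeld double `D(G) = (kG)* ⋈ kG` of a finite group:
a linear equivalence `(G → k) ⊗ kG ≃ D` carrying the unit and satisfying the double's
multiplication rule `(p_x ⋈ g)(p_y ⋈ h) = p_x p_{gyg⁻¹} ⋈ gh` on the spanning set. -/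
structure DoubleData (D : Type u) [Ring D] [Algebra k D] : Type u where
  e : ((G → k) ⊗[k] MonoidAlgebra k G) ≃ₗ[k] D
  unit : e ((1 : G → k) ⊗ₜ[k] (1 : MonoidAlgebra k G)) = 1
  mul : ∀ x y g h : G,
    e (Pi.single x (1:k) ⊗ₜ[k] (MonoidAlgebra.of k G g)) *
      e (Pi.single y (1:k) ⊗ₜ[k] (MonoidAlgebra.of k G h))
    = e ((Pi.single x (1:k) * Pi.single (g * y * g⁻¹) (1:k)) ⊗ₜ[k]
        (MonoidAlgebra.of k G (g * h)))

variable {k G}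
variable {D : Type u} [Ring D] [Algebra k D]

/-- The embedding `kG → D(G)`, `z ↦ 1 ⋈ z`. -/
noncomputable def DoubleData.emb (dd : DoubleData k G D) : MonoidAlgebra k G →ₗ[k] D :=
  dd.e.toLinearMap ∘ₗ (TensorProduct.mk k (G → k) (MonoidAlgebra k G)) (1 : G → k)

/-- The subspace `(kG)⁺D(G)` of `D(G)`. -/
noncomputable def DoubleData.QI (dd : DoubleData k G D) : Submodule k D :=
  Submodule.span k {z : D | ∃ (c : MonoidAlgebra k G) (d : D),
    (c.coeff.sum fun _ a => a) = 0 ∧ z = dd.emb c * d}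

/-- The quotient module `Q = D(G)/(kG)⁺D(G)`. -/
def DoubleData.Qcar (dd : DoubleData k G D) : Type u := D ⧸ dd.QI

noncomputable instance (dd : DoubleData k G D) : AddCommGroup dd.Qcar :=
  inferInstanceAs (AddCommGroup (D ⧸ dd.QI))
noncomputable instance (dd : DoubleData k G D) : Module k dd.Qcar :=
  inferInstanceAs (Module k (D ⧸ dd.QI))

/-- The class of an element of `D(G)` in `Q`. -/
noncomputable def DoubleData.Qmk (dd : DoubleData k G D) (d : D) : dd.Qcar := Submodule.Quotient.mk d

lemma DoubleData.QIle (dd : DoubleData k G D) (d' : D) :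
    dd.QI ≤ dd.QI.comap (LinearMap.mulRight k d') := by
  rw [DoubleData.QI, Submodule.span_le]
  rintro z ⟨c, d, hc, rfl⟩
  simp only [SetLike.mem_coe, Submodule.mem_comap, LinearMap.mulRight_apply]
  exact Submodule.subset_span ⟨c, d * d', hc, (mul_assoc _ d d')⟩

/-- Right multiplication by an element of `D(G)` descends to `Q`. -/
noncomputable def DoubleData.Qact (dd : DoubleData k G D) (d' : D) :
    dd.Qcar →ₗ[k] dd.Qcar :=
  Submodule.mapQ _ _ (LinearMap.mulRight k d') (dd.QIle d')

end GroupModDepth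


namespace GroupModDepth

open MulOpposite TensorProduct

universe u

variable {k G : Type u} [Field k] [Group G] [DecidableEq G]
variable {D : Type u} [Ring D] [Algebra k D]

section Aux
variable [Fintype G]

lemma piSingleMul (x y : G) :
    (Pi.single x (1:k) : G → k) * (Pi.single y (1:k) : G → k) =
      if x = y then (Pi.single x (1:k) : G → k) else 0 := by
  by_cases h : x = y
  · subst h; rw [if_pos rfl]
    funext w
    simp only [Pi.mul_apply, Pi.single_apply]
    split_ifs <;> simp
  · rw [if_neg h]
    funext w
    simp only [Pi.mul_apply, Pi.single_apply, Pi.zero_apply]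
    split_ifs <;> simp_all

lemma oneSum : (1 : G → k) = ∑ x : G, (Pi.single x (1:k) : G → k) :=
  (Finset.univ_sum_single (1 : G → k)).symm

lemma mulSingle (dd : DoubleData k G D) (x y g h : G) :
    dd.e ((Pi.single x (1:k) : G → k) ⊗ₜ[k] (MonoidAlgebra.of k G g)) *
      dd.e ((Pi.single y (1:k) : G → k) ⊗ₜ[k] (MonoidAlgebra.of k G h))
    = if x = g * y * g⁻¹ then
        dd.e ((Pi.single x (1:k) : G → k) ⊗ₜ[k] (MonoidAlgebra.of k G (g*h))) else 0 := by
  rw [dd.mul x y g h, piSingleMul]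
  split_ifs
  · rfl
  · rw [TensorProduct.zero_tmul]
    exact map_zero dd.e.toLinearMap

lemma mulA (dd : DoubleData k G D) (g y h : G) :
    dd.e ((1 : G → k) ⊗ₜ[k] (MonoidAlgebra.of k G g)) *
      dd.e ((Pi.single y (1:k) : G → k) ⊗ₜ[k] (MonoidAlgebra.of k G h))
    = dd.e ((Pi.single (g*y*g⁻¹) (1:k) : G → k) ⊗ₜ[k] (MonoidAlgebra.of k G (g*h))) := by
  rw [oneSum, TensorProduct.sum_tmul]
  rw [show dd.e (∑ x : G, (Pi.single x (1:k) : G → k) ⊗ₜ[k] (MonoidAlgebra.of k G g))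
      = ∑ x : G, dd.e ((Pi.single x (1:k) : G → k) ⊗ₜ[k] (MonoidAlgebra.of k G g)) from
    map_sum dd.e.toLinearMap _ _]
  rw [Finset.sum_mul]
  rw [Finset.sum_congr rfl (fun x _ => mulSingle dd x y g h)]
  rw [Finset.sum_ite_eq' Finset.univ (g*y*g⁻¹)
    (fun x => dd.e ((Pi.single x (1:k) : G → k) ⊗ₜ[k] (MonoidAlgebra.of k G (g*h))))]
  rw [if_pos (Finset.mem_univ _)]

lemma mulB (dd : DoubleData k G D) (x g h : G) :
    dd.e ((Pi.single x (1:k) : G → k) ⊗ₜ[k] (MonoidAlgebra.of k G g)) *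
      dd.e ((1 : G → k) ⊗ₜ[k] (MonoidAlgebra.of k G h))
    = dd.e ((Pi.single x (1:k) : G → k) ⊗ₜ[k] (MonoidAlgebra.of k G (g*h))) := by
  rw [oneSum, TensorProduct.sum_tmul]
  rw [show dd.e (∑ y : G, (Pi.single y (1:k) : G → k) ⊗ₜ[k] (MonoidAlgebra.of k G h))
      = ∑ y : G, dd.e ((Pi.single y (1:k) : G → k) ⊗ₜ[k] (MonoidAlgebra.of k G h)) from
    map_sum dd.e.toLinearMap _ _]
  rw [Finset.mul_sum]
  rw [Finset.sum_congr rfl (fun y _ => mulSingle dd x y g h)]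
  have hcond : ∀ y : G, (x = g * y * g⁻¹) = (y = g⁻¹ * x * g) := by
    intro y
    simp only [eq_iff_iff]
    constructor
    · rintro rfl; group
    · rintro rfl; group
  rw [Finset.sum_congr rfl (fun y _ => if_congr (iff_of_eq (hcond y)) rfl rfl)]
  rw [Finset.sum_ite_eq' Finset.univ (g⁻¹*x*g)
    (fun _ => dd.e ((Pi.single x (1:k) : G → k) ⊗ₜ[k] (MonoidAlgebra.of k G (g*h))))]
  rw [if_pos (Finset.mem_univ _)]


lemma central_single (dd : DoubleData k G D) (z : G) (hz : z ∈ Subgroup.center G) (b : D) :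
    b * dd.e ((1 : G → k) ⊗ₜ[k] (MonoidAlgebra.of k G z))
      = dd.e ((1 : G → k) ⊗ₜ[k] (MonoidAlgebra.of k G z)) * b := by
  set a := dd.e ((1 : G → k) ⊗ₜ[k] (MonoidAlgebra.of k G z)) with ha
  have hmaps : LinearMap.mulRight k a ∘ₗ dd.e.toLinearMap
      = LinearMap.mulLeft k a ∘ₗ dd.e.toLinearMap := by
    ext w x
    simp only [LinearMap.comp_apply, AlgebraTensorModule.curry_apply, TensorProduct.curry_apply,
      LinearMap.coe_restrictScalars, LinearMap.single_apply, MonoidAlgebra.lsingle_apply,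
      LinearMap.mulRight_apply, LinearMap.mulLeft_apply, LinearEquiv.coe_coe,
      ← MonoidAlgebra.of_apply]
    rw [ha, mulB dd w x z, mulA dd z w x]
    have h1 : z * w * z⁻¹ = w := by
      rw [(Subgroup.mem_center_iff.mp hz w).symm]; group
    have h2 : z * x = x * z := (Subgroup.mem_center_iff.mp hz x).symm
    rw [h1, h2]
  have := congrArg (fun f => f (dd.e.symm b)) hmaps
  simpa using this


lemma central_of_supported (dd : DoubleData k G D) (c : MonoidAlgebra k G)
    (hc : ∀ x : G, x ∉ Subgroup.center G → c.coeff x = 0) :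
    dd.e ((1 : G → k) ⊗ₜ[k] c) ∈ Set.center D := by
  rw [Semigroup.mem_center_iff]
  intro b
  have hrep : dd.e ((1 : G → k) ⊗ₜ[k] c)
      = ∑ x ∈ c.coeff.support, c.coeff x • dd.e ((1 : G → k) ⊗ₜ[k] (MonoidAlgebra.of k G x)) := by
    conv_lhs => rw [← MonoidAlgebra.sum_coeff_single c]
    rw [Finsupp.sum, TensorProduct.tmul_sum]
    rw [show dd.e (∑ a ∈ c.coeff.support, (1:G→k) ⊗ₜ[k] (MonoidAlgebra.single a (c.coeff a) : MonoidAlgebra k G))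
        = ∑ a ∈ c.coeff.support, dd.e ((1:G→k) ⊗ₜ[k] (MonoidAlgebra.single a (c.coeff a) : MonoidAlgebra k G)) from
      map_sum dd.e.toLinearMap _ _]
    refine Finset.sum_congr rfl fun x hx => ?_
    have : (MonoidAlgebra.single x (c.coeff x) : MonoidAlgebra k G) = c.coeff x • MonoidAlgebra.of k G x := by
      rw [MonoidAlgebra.of_apply, MonoidAlgebra.smul_single', mul_one]
    rw [this, TensorProduct.tmul_smul]
    exact map_smul dd.e.toLinearMap _ _
  rw [hrep, Finset.mul_sum, Finset.sum_mul]
  refine Finset.sum_congr rfl fun x hx => ?_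
  have hxc : x ∈ Subgroup.center G := by
    by_contra hxc
    exact (Finsupp.mem_support_iff.mp hx) (hc x hxc)
  rw [mul_smul_comm, smul_mul_assoc, central_single dd x hxc b]

/-- coordinate functional -/
noncomputable def coordFn (w x : G) : ((G → k) ⊗[k] MonoidAlgebra k G) →ₗ[k] k :=
  (TensorProduct.lid k k).toLinearMap ∘ₗ
    TensorProduct.map (LinearMap.proj w)
      (Finsupp.lapply x ∘ₗ (MonoidAlgebra.coeffLinearEquiv k).toLinearMap)

lemma coordFn_tmul (w x : G) (f : G → k) (c : MonoidAlgebra k G) :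
    coordFn w x (f ⊗ₜ[k] c) = f w * c.coeff x := by
  simp only [coordFn, LinearMap.comp_apply, LinearEquiv.coe_coe, TensorProduct.map_tmul,
    TensorProduct.lid_tmul, LinearMap.proj_apply, smul_eq_mul, Finsupp.lapply_apply]
  rfl

lemma supported_of_central (dd : DoubleData k G D) (c : MonoidAlgebra k G)
    (hcen : dd.e ((1 : G → k) ⊗ₜ[k] c) ∈ Set.center D) :
    ∀ x : G, x ∉ Subgroup.center G → c.coeff x = 0 := by
  intro x hx
  obtain ⟨y, hy⟩ : ∃ y : G, y * x ≠ x * y := by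
    by_contra h
    push_neg at h
    exact hx (Subgroup.mem_center_iff.mpr h)
  have key : dd.e ((1 : G → k) ⊗ₜ[k] c) * dd.e ((Pi.single y (1:k) : G → k) ⊗ₜ[k] (1 : MonoidAlgebra k G))
      = dd.e ((Pi.single y (1:k) : G → k) ⊗ₜ[k] (1 : MonoidAlgebra k G)) * dd.e ((1 : G → k) ⊗ₜ[k] c) :=
    (Semigroup.mem_center_iff.mp hcen _).symm
  -- express both sides as e of linear combinations
  set F : G → ((G → k) ⊗[k] MonoidAlgebra k G) :=
    fun x' => (Pi.single (x'*y*x'⁻¹) (1:k) : G → k) ⊗ₜ[k] (MonoidAlgebra.of k G x') with hF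
  set F' : G → ((G → k) ⊗[k] MonoidAlgebra k G) :=
    fun x' => (Pi.single y (1:k) : G → k) ⊗ₜ[k] (MonoidAlgebra.of k G x') with hF'
  have hone : (1 : MonoidAlgebra k G) = MonoidAlgebra.of k G 1 := rfl
  have hL : LinearMap.mulRight k (dd.e ((Pi.single y (1:k) : G → k) ⊗ₜ[k] (1 : MonoidAlgebra k G)))
        ∘ₗ dd.e.toLinearMap ∘ₗ TensorProduct.mk k (G → k) (MonoidAlgebra k G) (1 : G → k)
      = dd.e.toLinearMap ∘ₗ Finsupp.linearCombination k F
          ∘ₗ (MonoidAlgebra.coeffLinearEquiv k).toLinearMap := by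
    refine MonoidAlgebra.lhom_ext' fun x' => LinearMap.ext_ring ?_
    simp only [LinearMap.comp_apply, MonoidAlgebra.lsingle_apply, LinearMap.mulRight_apply,
      TensorProduct.mk_apply, LinearEquiv.coe_coe, MonoidAlgebra.coeffLinearEquiv_apply,
        MonoidAlgebra.coeff_single, Finsupp.linearCombination_single, one_smul]
    rw [← MonoidAlgebra.of_apply, hone, mulA dd x' y 1, mul_one, hF,
      MonoidAlgebra.of_apply]
    rfl
  have hR : LinearMap.mulLeft k (dd.e ((Pi.single y (1:k) : G → k) ⊗ₜ[k] (1 : MonoidAlgebra k G)))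
        ∘ₗ dd.e.toLinearMap ∘ₗ TensorProduct.mk k (G → k) (MonoidAlgebra k G) (1 : G → k)
      = dd.e.toLinearMap ∘ₗ Finsupp.linearCombination k F'
          ∘ₗ (MonoidAlgebra.coeffLinearEquiv k).toLinearMap := by
    refine MonoidAlgebra.lhom_ext' fun x' => LinearMap.ext_ring ?_
    simp only [LinearMap.comp_apply, MonoidAlgebra.lsingle_apply, LinearMap.mulLeft_apply,
      TensorProduct.mk_apply, LinearEquiv.coe_coe, MonoidAlgebra.coeffLinearEquiv_apply,
        MonoidAlgebra.coeff_single, Finsupp.linearCombination_single, one_smul]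
    rw [← MonoidAlgebra.of_apply, hone, mulB dd y 1 x', one_mul, hF',
      MonoidAlgebra.of_apply]
    rfl
  have keyc : Finsupp.linearCombination k F c.coeff = Finsupp.linearCombination k F' c.coeff := by
    apply dd.e.injective
    have h1 := congrArg (fun f => f c) hL
    have h2 := congrArg (fun f => f c) hR
    simp only [LinearMap.comp_apply, TensorProduct.mk_apply, LinearEquiv.coe_coe,
      LinearMap.mulRight_apply, LinearMap.mulLeft_apply,
      MonoidAlgebra.coeffLinearEquiv_apply] at h1 h2
    exact (h1.symm.trans key).trans h2
  have hcoord := congrArg (coordFn (x*y*x⁻¹) x) keyc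
  rw [Finsupp.linearCombination_apply, Finsupp.linearCombination_apply] at hcoord
  rw [map_finsuppSum, map_finsuppSum] at hcoord
  simp only [map_smul, hF, hF', coordFn_tmul, smul_eq_mul] at hcoord
  have hne : ¬ (x*y*x⁻¹ = y) := by
    intro h
    apply hy
    have : x * y = y * x := by
      conv_rhs => rw [← h]
      group
    exact this.symm
  have hLHS : (Finsupp.sum c.coeff fun a b =>
      b * ((Pi.single (a * y * a⁻¹) (1:k) : G → k) (x * y * x⁻¹) * ((MonoidAlgebra.of k G) a).coeff x)) = c.coeff x := by
    unfold Finsupp.sum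
    rw [Finset.sum_eq_single x]
    · simp [MonoidAlgebra.of_apply, MonoidAlgebra.coeff_single, Finsupp.single_apply, Pi.single_apply]
    · intro a _ ha
      simp [MonoidAlgebra.of_apply, MonoidAlgebra.coeff_single, Finsupp.single_apply, ha]
    · intro hxs
      simp [Finsupp.notMem_support_iff.mp hxs]
  have hRHS : (Finsupp.sum c.coeff fun a b =>
      b * ((Pi.single y (1:k) : G → k) (x * y * x⁻¹) * ((MonoidAlgebra.of k G) a).coeff x)) = 0 := by
    unfold Finsupp.sum
    refine Finset.sum_eq_zero fun a _ => ?_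
    simp [Pi.single_apply, hne]
  rw [hLHS, hRHS] at hcoord
  exact hcoord
end Aux

end GroupModDepth

open GroupModDepth TensorProduct in
/-- for a finite group `G` and a field `k` with `char k ∤ |G|`, identifying
`kG` with the subalgebra `1_{(kG)*} ⋈ kG` of the Drinfeld double `D(G)`, the centers satisfy
`kZ(G) = Z(D(G)) ∩ kG`. -/
theorem center_of_drinfeld_double_meet_group_algebra
    (k G D : Type u) [Field k] [Group G] [Fintype G] [DecidableEq G]
    [Ring D] [Algebra k D]
    (hchar : (Fintype.card G : k) ≠ 0)
    (dd : DoubleData k G D) :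
    {d : D | ∃ c : MonoidAlgebra k G,
        (∀ x : G, x ∉ Subgroup.center G → c.coeff x = 0) ∧ d = dd.e ((1 : G → k) ⊗ₜ[k] c)}
      = Set.center D ∩
        {d : D | ∃ c : MonoidAlgebra k G, d = dd.e ((1 : G → k) ⊗ₜ[k] c)} := by
  ext d
  constructor
  · rintro ⟨c, hc, rfl⟩
    exact ⟨central_of_supported dd c hc, ⟨c, rfl⟩⟩
  · rintro ⟨hcen, c, rfl⟩
    exact ⟨c, supported_of_central dd c hcen, rfl⟩
end
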